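/- For the two-level certification function f : S → {1,…,d} defined above, the adversary bound satisfies ADV(f) ≥ d − 1. -/

import Mathlib

open Matrix

noncomputable def specNorm {n : Type*} [Fintype n] [DecidableEq n] (M : Matrix n n ℝ) : ℝ :=
  ‖Matrix.toEuclideanCLM (𝕜 := ℝ) M‖

def diffMatrix {V ι : Type*} (inp : V → ι → Bool) (i : ι) : Matrix V V ℝ :=
  Matrix.of fun x y => if inp x i ≠ inp y i then (1 : ℝ) else 0

noncomputable def ADV {V ι σ : Type*} [Fintype V] [DecidableEq V] [Fintype ι]
    (inp : V → ι → Bool) (f : V → σ) : ℝ :=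
  sSup { r : ℝ | ∃ Γ : Matrix V V ℝ, Γ ≠ 0 ∧ Γ.IsSymm ∧ (∀ x y, 0 ≤ Γ x y) ∧
    (∀ x y, f x = f y → Γ x y = 0) ∧
    r = specNorm Γ / ⨆ i : ι, specNorm (Γ ⊙ diffMatrix inp i) }

def inS (d : ℕ) (x : Fin d → Fin d → Bool) : Prop :=
  ∃ b : Fin d, (∀ i, x b i = true) ∧
    ∀ b', b' ≠ b → (Finset.univ.filter fun i => x b' i = false).card = 1

instance (d : ℕ) : DecidablePred (inS d) := fun x => by unfold inS; infer_instance

/-! ### Auxiliary spectral norm lemmas -/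

section SpecNorm

variable {n : Type*} [Fintype n] [DecidableEq n]

lemma specNorm_apply' (M : Matrix n n ℝ) (u : EuclideanSpace ℝ n) (x : n) :
    (Matrix.toEuclideanCLM (𝕜 := ℝ) M u) x = M.mulVec u x := rfl

lemma specNorm_nonneg' (M : Matrix n n ℝ) : 0 ≤ specNorm M := norm_nonneg _

lemma norm_image (M : Matrix n n ℝ) (u : EuclideanSpace ℝ n) :
    ‖Matrix.toEuclideanCLM (𝕜 := ℝ) M u‖ = Real.sqrt (∑ x, (M.mulVec u x) ^ 2) := by
  rw [EuclideanSpace.norm_eq]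
  congr 1
  refine Finset.sum_congr rfl fun x _ => ?_
  rw [specNorm_apply', Real.norm_eq_abs, sq_abs]

lemma specNorm_le_of_rowsum (M : Matrix n n ℝ) (R : ℝ) (hR : 0 ≤ R)
    (h0 : ∀ x y, 0 ≤ M x y) (hrow : ∀ x, ∑ y, M x y ≤ R) (hcol : ∀ y, ∑ x, M x y ≤ R) :
    specNorm M ≤ R := by
  refine ContinuousLinearMap.opNorm_le_bound _ hR fun u => ?_
  rw [norm_image, EuclideanSpace.norm_eq]
  have key : ∑ x, (M.mulVec u x) ^ 2 ≤ R ^ 2 * ∑ y, ‖u y‖ ^ 2 := by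
    have step1 : ∀ x, (M.mulVec u x) ^ 2 ≤ R * ∑ y, M x y * (u y) ^ 2 := by
      intro x
      have h1 : (M.mulVec u x) ^ 2 ≤ (∑ y, M x y * |u y|) ^ 2 := by
        rw [Matrix.mulVec, dotProduct]
        have := Finset.abs_sum_le_sum_abs (fun y => M x y * u y) Finset.univ
        have h2 : ∑ y, |M x y * u y| = ∑ y, M x y * |u y| := by
          refine Finset.sum_congr rfl fun y _ => ?_
          rw [abs_mul, abs_of_nonneg (h0 x y)]
        calc (∑ y, M x y * u y) ^ 2 ≤ |∑ y, M x y * u y| ^ 2 := by rw [sq_abs]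
          _ ≤ (∑ y, M x y * |u y|) ^ 2 := by
              apply pow_le_pow_left₀ (abs_nonneg _) (h2 ▸ this)
      have h3 : (∑ y, M x y * |u y|) ^ 2 ≤ (∑ y, M x y) * ∑ y, M x y * (u y) ^ 2 := by
        have cs := Finset.sum_mul_sq_le_sq_mul_sq Finset.univ
          (fun y => Real.sqrt (M x y)) (fun y => Real.sqrt (M x y) * |u y|)
        have e1 : ∀ y, Real.sqrt (M x y) * (Real.sqrt (M x y) * |u y|) = M x y * |u y| := by
          intro y; rw [← mul_assoc, Real.mul_self_sqrt (h0 x y)]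
        have e2 : ∀ y, Real.sqrt (M x y) ^ 2 = M x y := fun y => Real.sq_sqrt (h0 x y)
        have e3 : ∀ y, (Real.sqrt (M x y) * |u y|) ^ 2 = M x y * (u y) ^ 2 := by
          intro y; rw [mul_pow, e2, sq_abs]
        simp only [e1, e2, e3] at cs
        exact cs
      calc (M.mulVec u x) ^ 2 ≤ (∑ y, M x y) * ∑ y, M x y * (u y) ^ 2 := le_trans h1 h3
        _ ≤ R * ∑ y, M x y * (u y) ^ 2 := by
            apply mul_le_mul_of_nonneg_right (hrow x)
            exact Finset.sum_nonneg fun y _ => mul_nonneg (h0 x y) (sq_nonneg _)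
    calc ∑ x, (M.mulVec u x) ^ 2 ≤ ∑ x, R * ∑ y, M x y * (u y) ^ 2 :=
          Finset.sum_le_sum fun x _ => step1 x
      _ = R * ∑ y, (∑ x, M x y) * (u y) ^ 2 := by
          rw [← Finset.mul_sum, Finset.sum_comm]
          congr 1
          refine Finset.sum_congr rfl fun y _ => ?_
          rw [Finset.sum_mul]
      _ ≤ R * ∑ y, R * (u y) ^ 2 := by
          apply mul_le_mul_of_nonneg_left _ hR
          exact Finset.sum_le_sum fun y _ =>
            mul_le_mul_of_nonneg_right (hcol y) (sq_nonneg _)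
      _ = R ^ 2 * ∑ y, ‖u y‖ ^ 2 := by
          rw [← Finset.mul_sum, ← mul_assoc, ← sq]
          congr 1
          exact Finset.sum_congr rfl fun y _ => by rw [Real.norm_eq_abs, sq_abs]
  calc Real.sqrt (∑ x, (M.mulVec u x) ^ 2) ≤ Real.sqrt (R ^ 2 * ∑ y, ‖u y‖ ^ 2) :=
        Real.sqrt_le_sqrt key
    _ = R * Real.sqrt (∑ y, ‖u y‖ ^ 2) := by
        rw [Real.sqrt_mul (sq_nonneg R), Real.sqrt_sq hR]

lemma le_specNorm_of_apply (M : Matrix n n ℝ) (c : ℝ) (u : EuclideanSpace ℝ n)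
    (hu : u ≠ 0) (h : c * ‖u‖ ≤ ‖Matrix.toEuclideanCLM (𝕜 := ℝ) M u‖) :
    c ≤ specNorm M := by
  have h2 := ContinuousLinearMap.le_opNorm (Matrix.toEuclideanCLM (𝕜 := ℝ) M) u
  have hu' : 0 < ‖u‖ := norm_pos_iff.mpr hu
  exact le_of_mul_le_mul_right (le_trans h h2) hu'

lemma specNorm_pos (M : Matrix n n ℝ) (hM : M ≠ 0) : 0 < specNorm M := by
  rw [specNorm, norm_pos_iff]
  intro h
  apply hM
  have h2 : Matrix.toEuclideanCLM (𝕜 := ℝ) M = Matrix.toEuclideanCLM (𝕜 := ℝ) (0 : Matrix n n ℝ) := by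
    rw [h, map_zero]
  exact EquivLike.injective _ h2

lemma specNorm_sum_le {ι : Type*} [Fintype ι] (M : ι → Matrix n n ℝ) :
    specNorm (∑ i, M i) ≤ ∑ i, specNorm (M i) := by
  unfold specNorm
  rw [map_sum]
  exact norm_sum_le _ _

lemma specNorm_mono (A B : Matrix n n ℝ) (h : ∀ x y, |A x y| ≤ B x y) :
    specNorm A ≤ specNorm B := by
  refine ContinuousLinearMap.opNorm_le_bound _ (specNorm_nonneg' B) fun u => ?_
  set v : EuclideanSpace ℝ n := WithLp.toLp 2 (fun y => |u y|) with hv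
  have hvn : ‖v‖ = ‖u‖ := by
    rw [EuclideanSpace.norm_eq, EuclideanSpace.norm_eq]
    congr 1
    exact Finset.sum_congr rfl fun y _ => by simp [hv, Real.norm_eq_abs, abs_abs]
  have hAB : ‖Matrix.toEuclideanCLM (𝕜 := ℝ) A u‖ ≤ ‖Matrix.toEuclideanCLM (𝕜 := ℝ) B v‖ := by
    rw [norm_image, norm_image]
    apply Real.sqrt_le_sqrt
    refine Finset.sum_le_sum fun x _ => ?_
    have h1 : |A.mulVec u x| ≤ B.mulVec v x := by
      rw [Matrix.mulVec, dotProduct]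
      calc |∑ y, A x y * u y| ≤ ∑ y, |A x y * u y| := Finset.abs_sum_le_sum_abs _ _
        _ ≤ ∑ y, B x y * v y := by
            refine Finset.sum_le_sum fun y _ => ?_
            rw [abs_mul]
            exact mul_le_mul_of_nonneg_right (h x y) (abs_nonneg _) |>.trans
              (mul_le_mul_of_nonneg_left (le_refl _) ((abs_nonneg _).trans (h x y)))
    calc (A.mulVec u x) ^ 2 = |A.mulVec u x| ^ 2 := (sq_abs _).symm
      _ ≤ (B.mulVec v x) ^ 2 := pow_le_pow_left₀ (abs_nonneg _) h1 2
  calc ‖Matrix.toEuclideanCLM (𝕜 := ℝ) A u‖ ≤ ‖Matrix.toEuclideanCLM (𝕜 := ℝ) B v‖ := hAB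
    _ ≤ specNorm B * ‖v‖ := ContinuousLinearMap.le_opNorm _ _
    _ = specNorm B * ‖u‖ := by rw [hvn]

end SpecNorm

/-! ### Combinatorial auxiliary lemmas -/

set_option linter.unusedSectionVars false

namespace TwoLevelAux

variable {d : ℕ}

abbrev SV (d : ℕ) := {x : Fin d → Fin d → Bool // inS d x}

variable (f : SV d → Fin d)
variable (hf : ∀ (x : SV d) (i : Fin d), x.1 (f x) i = true)

include hf

lemma eq_f (x : SV d) (p : Fin d) (hp : ∀ i, x.1 p i = true) : p = f x := by
  obtain ⟨b, hb, ho⟩ := x.2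
  have key : ∀ r : Fin d, (∀ i, x.1 r i = true) → r = b := by
    intro r hr
    by_contra h
    have hc := ho r h
    have hne : (Finset.univ.filter fun i => x.1 r i = false).Nonempty := by
      rw [← Finset.card_pos, hc]; norm_num
    obtain ⟨i, hi⟩ := hne
    simp only [Finset.mem_filter] at hi
    rw [hr i] at hi
    exact absurd hi.2 (by simp)
  rw [key p hp, key (f x) (hf x)]

lemma f_card (x : SV d) (p : Fin d) (hp : p ≠ f x) :
    (Finset.univ.filter fun i => x.1 p i = false).card = 1 := by
  obtain ⟨b, hb, ho⟩ := x.2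
  have hb' : b = f x := eq_f f hf x b hb
  exact ho p (by rw [hb']; exact hp)

lemma exists_false (x : SV d) (p : Fin d) (hp : p ≠ f x) : ∃ i, x.1 p i = false := by
  have hc := f_card f hf x p hp
  have hne : (Finset.univ.filter fun i => x.1 p i = false).Nonempty := by
    rw [← Finset.card_pos, hc]; norm_num
  obtain ⟨i, hi⟩ := hne
  simp only [Finset.mem_filter] at hi
  exact ⟨i, hi.2⟩

lemma row_char (x : SV d) (p : Fin d) (hp : p ≠ f x) {k : Fin d} (hk : x.1 p k = false)
    (q : Fin d) : x.1 p q = false ↔ q = k := by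
  obtain ⟨a, ha⟩ := Finset.card_eq_one.mp (f_card f hf x p hp)
  have hka : k = a := by
    have hmem : k ∈ Finset.univ.filter fun i => x.1 p i = false := by simp [hk]
    rw [ha] at hmem; simpa using hmem
  constructor
  · intro hq
    have hq' : q ∈ Finset.univ.filter fun i => x.1 p i = false := by simp [hq]
    rw [ha] at hq'
    simp only [Finset.mem_singleton] at hq'
    rw [hq', ← hka]
  · intro hq; rw [hq]; exact hk

def adj (x y : SV d) : Prop :=
  f x ≠ f y ∧ ∀ p, p ≠ f x → p ≠ f y → x.1 p = y.1 p

instance (x y : SV d) : Decidable (adj f x y) := by unfold adj; infer_instance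

omit hf in
lemma adj_symm (x y : SV d) (h : adj f x y) : adj f y x :=
  ⟨h.1.symm, fun p h1 h2 => (h.2 p h2 h1).symm⟩

lemma adj_ext (x y y' : SV d) (hy : adj f x y) (hy' : adj f x y')
    (h1 : f y = f y') (h2 : y.1 (f x) = y'.1 (f x)) : y = y' := by
  apply Subtype.ext
  funext p q
  by_cases hp1 : p = f y
  · subst hp1
    rw [hf y q, h1, hf y' q]
  · by_cases hp2 : p = f x
    · subst hp2
      exact congrFun h2 q
    · have e1 := hy.2 p hp2 hp1
      have e2 := hy'.2 p hp2 (h1 ▸ hp1)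
      exact (congrFun e1 q).symm.trans (congrFun e2 q)

def buildFun (x : Fin d → Fin d → Bool) (b b' k : Fin d) : Fin d → Fin d → Bool :=
  fun p q => if p = b' then true else if p = b then decide (q ≠ k) else x p q

lemma build_inS (x : SV d) (b' k : Fin d) (hb' : b' ≠ f x) :
    inS d (buildFun x.1 (f x) b' k) := by
  refine ⟨b', fun i => by simp [buildFun], fun p hp => ?_⟩
  by_cases hpf : p = f x
  · subst hpf
    have hfx : ¬ (f x = b') := fun h => hb' h.symm
    have heq : (Finset.univ.filter fun q => buildFun x.1 (f x) b' k (f x) q = false) = {k} := by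
      ext q
      simp [buildFun, hfx]
    rw [heq]
    exact Finset.card_singleton k
  · have heq : (Finset.univ.filter fun q => buildFun x.1 (f x) b' k p q = false)
        = Finset.univ.filter fun q => x.1 p q = false := by
      ext q
      simp [buildFun, hp, hpf]
    rw [heq]
    exact f_card f hf x p hpf

def bld (x : SV d) (b' k : Fin d) (hb' : b' ≠ f x) : SV d :=
  ⟨buildFun x.1 (f x) b' k, build_inS f hf x b' k hb'⟩

lemma f_bld (x : SV d) (b' k : Fin d) (hb' : b' ≠ f x) : f (bld f hf x b' k hb') = b' :=
  (eq_f f hf _ b' (fun i => by simp [bld, buildFun])).symm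

lemma adj_bld (x : SV d) (b' k : Fin d) (hb' : b' ≠ f x) : adj f x (bld f hf x b' k hb') := by
  constructor
  · rw [f_bld f hf]
    exact fun h => hb' h.symm
  · intro p hp hpb
    rw [f_bld f hf] at hpb
    funext q
    simp [bld, buildFun, hp, hpb]

lemma deg_ge (x : SV d) :
    (d - 1) * d ≤ (Finset.univ.filter fun y => adj f x y).card := by
  classical
  have hcard : ((Finset.univ.filter (· ≠ f x)) ×ˢ (Finset.univ : Finset (Fin d))).card
      = (d - 1) * d := by
    rw [Finset.card_product, Finset.filter_ne', Finset.card_erase_of_mem (Finset.mem_univ _)]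
    simp
  rw [← hcard]
  set F : Fin d × Fin d → SV d :=
    fun bk => if h : bk.1 ≠ f x then bld f hf x bk.1 bk.2 h else x with hF
  refine Finset.card_le_card_of_injOn F ?_ ?_
  · rintro ⟨b', k⟩ hmem
    simp only [Finset.coe_product, Set.mem_prod, Finset.mem_coe, Finset.mem_product, Finset.mem_filter] at hmem
    have hb' : b' ≠ f x := hmem.1.2
    simp only [Finset.mem_coe, Finset.mem_filter, Finset.mem_univ, true_and]
    rw [hF]
    simp only [dif_pos hb']
    exact adj_bld f hf x b' k hb'
  · rintro ⟨b', k⟩ h1 ⟨b'', k'⟩ h2 heq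
    simp only [Finset.coe_product, Set.mem_prod, Finset.mem_coe, Finset.mem_filter] at h1 h2
    have hb' : b' ≠ f x := h1.1.2
    have hb'' : b'' ≠ f x := h2.1.2
    rw [hF] at heq
    simp only [dif_pos hb', dif_pos hb''] at heq
    have hbb : b' = b'' := by
      have := congrArg f heq
      rwa [f_bld f hf, f_bld f hf] at this
    subst hbb
    have hkk : k = k' := by
      have hval := congrArg Subtype.val heq
      have h3 := congrFun (congrFun hval (f x)) k
      simp only [bld, buildFun] at h3
      have hfx : ¬ (f x = b') := fun h => hb' h.symm
      simp only [hfx, if_false, if_true, eq_self_iff_true, decide_eq_decide] at h3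
      by_contra hne
      simp at h3
      exact hne h3
    simp [hkk]

lemma hit_le (x : SV d) (p q : Fin d) :
    (Finset.univ.filter fun y => adj f x y ∧ x.1 p q ≠ y.1 p q).card ≤ d := by
  classical
  by_cases hp : p = f x
  · subst hp
    have := Finset.card_le_card_of_injOn (fun y : SV d => f y)
      (fun y _ => Finset.mem_univ (f y)) ?_ (s := Finset.univ.filter
        fun y => adj f x y ∧ x.1 (f x) q ≠ y.1 (f x) q)
    · simpa using this
    · intro y hy y' hy' hfe
      simp only [Finset.coe_filter, Set.mem_setOf_eq, Finset.mem_univ, true_and] at hy hy'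
      obtain ⟨hadj, hdiff⟩ := hy
      obtain ⟨hadj', hdiff'⟩ := hy'
      have hxt : x.1 (f x) q = true := hf x q
      have hyf : y.1 (f x) q = false := by
        rcases Bool.eq_false_or_eq_true (y.1 (f x) q) with h | h
        · exact absurd (hxt.trans h.symm) hdiff
        · exact h
      have hyf' : y'.1 (f x) q = false := by
        rcases Bool.eq_false_or_eq_true (y'.1 (f x) q) with h | h
        · exact absurd (hxt.trans h.symm) hdiff'
        · exact h
      have c1 := row_char f hf y (f x) hadj.1 hyf
      have c2 := row_char f hf y' (f x) hadj'.1 hyf'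
      refine adj_ext f hf x y y' hadj hadj' hfe ?_
      funext q'
      by_cases hq' : q' = q
      · rw [(c1 q').mpr hq', (c2 q').mpr hq']
      · have t1 : y.1 (f x) q' = true := by
          rcases Bool.eq_false_or_eq_true (y.1 (f x) q') with h | h
          · exact h
          · exact absurd ((c1 q').mp h) hq'
        have t2 : y'.1 (f x) q' = true := by
          rcases Bool.eq_false_or_eq_true (y'.1 (f x) q') with h | h
          · exact h
          · exact absurd ((c2 q').mp h) hq'
        rw [t1, t2]
  · set g : SV d → Fin d := fun y =>
      if h : ∃ j, y.1 (f x) j = false then h.choose else q with hg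
    have := Finset.card_le_card_of_injOn g
      (fun y _ => Finset.mem_univ (g y)) ?_ (s := Finset.univ.filter
        fun y => adj f x y ∧ x.1 p q ≠ y.1 p q)
    · simpa using this
    · intro y hy y' hy' hge
      simp only [Finset.coe_filter, Set.mem_setOf_eq, Finset.mem_univ, true_and] at hy hy'
      obtain ⟨hadj, hdiff⟩ := hy
      obtain ⟨hadj', hdiff'⟩ := hy'
      have hfy : f y = p := by
        by_contra hne
        have := hadj.2 p hp (fun hh => hne hh.symm)
        exact hdiff (congrFun this q)
      have hfy' : f y' = p := by
        by_contra hne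
        have := hadj'.2 p hp (fun hh => hne hh.symm)
        exact hdiff' (congrFun this q)
      have hex : ∃ j, y.1 (f x) j = false := exists_false f hf y (f x) hadj.1
      have hex' : ∃ j, y'.1 (f x) j = false := exists_false f hf y' (f x) hadj'.1
      have hgy : y.1 (f x) (g y) = false := by
        rw [hg]; simp only [dif_pos hex]; exact hex.choose_spec
      have hgy' : y'.1 (f x) (g y') = false := by
        rw [hg]; simp only [dif_pos hex']; exact hex'.choose_spec
      have c1 := row_char f hf y (f x) hadj.1 hgy
      have c2 := row_char f hf y' (f x) hadj'.1 hgy'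
      refine adj_ext f hf x y y' hadj hadj' (hfy.trans hfy'.symm) ?_
      funext q'
      by_cases hq' : q' = g y
      · rw [(c1 q').mpr hq', (c2 q').mpr (by rw [hq', hge])]
      · have t1 : y.1 (f x) q' = true := by
          rcases Bool.eq_false_or_eq_true (y.1 (f x) q') with h | h
          · exact h
          · exact absurd ((c1 q').mp h) hq'
        have t2 : y'.1 (f x) q' = true := by
          rcases Bool.eq_false_or_eq_true (y'.1 (f x) q') with h | h
          · exact h
          · exact absurd ((c2 q').mp h) (hge ▸ hq')
        rw [t1, t2]

lemma exists_diff (x y : SV d) (h : f x ≠ f y) :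
    ∃ i : Fin d × Fin d, x.1 i.1 i.2 ≠ y.1 i.1 i.2 := by
  obtain ⟨j, hj⟩ := exists_false f hf y (f x) h
  exact ⟨(f x, j), by rw [hf x j, hj]; simp⟩

omit hf in
lemma SV_nonempty (hd : 2 ≤ d) : Nonempty (SV d) := by
  have hd0 : 0 < d := by omega
  set z : Fin d := ⟨0, hd0⟩ with hz
  refine ⟨⟨fun p q => if p = z then true else decide (q ≠ z), ⟨z, fun i => by simp, ?_⟩⟩⟩
  intro p hp
  have heq : (Finset.univ.filter fun i =>
      (if p = z then true else decide (i ≠ z)) = false) = {z} := by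
    ext i
    simp [hp]
  rw [heq]
  exact Finset.card_singleton z

end TwoLevelAux

open TwoLevelAux

theorem twoLevel_adv_lower_bound (d : ℕ) (hd : 2 ≤ d)
    (f : {x : Fin d → Fin d → Bool // inS d x} → Fin d)
    (hf : ∀ (x : {x : Fin d → Fin d → Bool // inS d x}) (i : Fin d), x.1 (f x) i = true) :
    (d : ℝ) - 1 ≤
      ADV (fun (x : {x : Fin d → Fin d → Bool // inS d x}) (p : Fin d × Fin d) =>
        x.1 p.1 p.2) f := by
  classical
  obtain ⟨x0⟩ : Nonempty (SV d) := SV_nonempty hd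
  haveI : Nontrivial (Fin d) := Fin.nontrivial_iff_two_le.mpr hd
  obtain ⟨b0, hb0⟩ := exists_ne (f x0)
  have hd0 : 0 < d := by omega
  set z : Fin d := ⟨0, hd0⟩ with hz
  set y0 := bld f hf x0 b0 z hb0 with hy0
  have hadj0 : adj f x0 y0 := adj_bld f hf x0 b0 z hb0
  set inp : SV d → (Fin d × Fin d) → Bool := fun x p => x.1 p.1 p.2 with hinp
  set Γ : Matrix (SV d) (SV d) ℝ :=
    Matrix.of (fun x y => if adj f x y then (1:ℝ) else 0) with hΓ
  have hΓent : ∀ x y, Γ x y = if adj f x y then (1:ℝ) else 0 := fun x y => rfl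
  have hHent : ∀ (i : Fin d × Fin d) (x y : SV d), (Γ ⊙ diffMatrix inp i) x y
      = if adj f x y ∧ x.1 i.1 i.2 ≠ y.1 i.1 i.2 then (1:ℝ) else 0 := by
    intro i x y
    by_cases h1 : adj f x y <;> by_cases h2 : x.1 i.1 i.2 ≠ y.1 i.1 i.2 <;>
      simp [Matrix.hadamard_apply, diffMatrix, hΓent, hinp, h1, h2]
  have hHnn : ∀ (i : Fin d × Fin d) (x y : SV d), 0 ≤ (Γ ⊙ diffMatrix inp i) x y := by
    intro i x y; rw [hHent]; split_ifs <;> norm_num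
  have hHsymm : ∀ (i : Fin d × Fin d) (x y : SV d),
      (Γ ⊙ diffMatrix inp i) x y = (Γ ⊙ diffMatrix inp i) y x := by
    intro i x y
    rw [hHent, hHent]
    refine if_congr ?_ rfl rfl
    constructor
    · rintro ⟨ha, hb⟩; exact ⟨adj_symm f x y ha, hb.symm⟩
    · rintro ⟨ha, hb⟩; exact ⟨adj_symm f y x ha, hb.symm⟩
  have hrow : ∀ (i : Fin d × Fin d) (x : SV d),
      ∑ y, (Γ ⊙ diffMatrix inp i) x y ≤ (d:ℝ) := by
    intro i x
    have h1 : ∑ y, (Γ ⊙ diffMatrix inp i) x y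
        = ((Finset.univ.filter fun y : SV d =>
            adj f x y ∧ x.1 i.1 i.2 ≠ y.1 i.1 i.2).card : ℝ) := by
      rw [← Finset.sum_boole]
      exact Finset.sum_congr rfl fun y _ => hHent i x y
    rw [h1]
    exact Nat.cast_le.mpr (hit_le f hf x i.1 i.2)
  have hcol : ∀ (i : Fin d × Fin d) (y : SV d),
      ∑ x, (Γ ⊙ diffMatrix inp i) x y ≤ (d:ℝ) := by
    intro i y
    calc ∑ x, (Γ ⊙ diffMatrix inp i) x y = ∑ x, (Γ ⊙ diffMatrix inp i) y x :=
          Finset.sum_congr rfl fun x _ => hHsymm i x y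
      _ ≤ d := hrow i y
  have hDeach : ∀ i : Fin d × Fin d, specNorm (Γ ⊙ diffMatrix inp i) ≤ (d:ℝ) := fun i =>
    specNorm_le_of_rowsum _ _ (by positivity) (fun x y => hHnn i x y) (hrow i) (hcol i)
  haveI : Nonempty (Fin d × Fin d) := ⟨(z, z)⟩
  set Dsup := ⨆ i : Fin d × Fin d, specNorm (Γ ⊙ diffMatrix inp i) with hDsup
  have hDle : Dsup ≤ d := by rw [hDsup]; exact ciSup_le hDeach
  obtain ⟨i0, hi0⟩ := exists_diff f hf x0 y0 hadj0.1
  have hH0 : (Γ ⊙ diffMatrix inp i0) ≠ 0 := by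
    intro h
    have h2 : (Γ ⊙ diffMatrix inp i0) x0 y0 = (0 : Matrix (SV d) (SV d) ℝ) x0 y0 := by rw [h]
    rw [hHent, if_pos ⟨hadj0, hi0⟩] at h2
    simp at h2
  have hDpos : 0 < Dsup := by
    rw [hDsup]
    exact lt_of_lt_of_le (specNorm_pos _ hH0) (le_ciSup (f := fun i : Fin d × Fin d => specNorm (Γ ⊙ diffMatrix inp i)) (Finite.bddAbove_range _) i0)
  have hΓ0 : Γ ≠ 0 := by
    intro h
    have h2 : Γ x0 y0 = (0 : Matrix (SV d) (SV d) ℝ) x0 y0 := by rw [h]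
    rw [hΓent, if_pos hadj0] at h2
    simp at h2
  have hΓsymm : Γ.IsSymm := by
    unfold Matrix.IsSymm
    ext x y
    rw [Matrix.transpose_apply, hΓent, hΓent]
    exact if_congr ⟨adj_symm f y x, adj_symm f x y⟩ rfl rfl
  have hΓnn : ∀ x y, 0 ≤ Γ x y := by
    intro x y; rw [hΓent]; split_ifs <;> norm_num
  have hΓf : ∀ x y, f x = f y → Γ x y = 0 := by
    intro x y h
    rw [hΓent, if_neg]
    intro hadj
    exact hadj.1 h
  have h1d : (1:ℝ) ≤ d := by exact_mod_cast (by omega : 1 ≤ d)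
  have hc : 0 ≤ ((d:ℝ)-1)*d := by nlinarith
  have hdN : ((d:ℝ) - 1) * d ≤ specNorm Γ := by
    set u : EuclideanSpace ℝ (SV d) := WithLp.toLp 2 (fun _ => (1:ℝ)) with hu
    have hvc : ∀ x, ((d:ℝ)-1)*d ≤ Γ.mulVec u x := by
      intro x
      have h1 : Γ.mulVec u x = ∑ y, Γ x y := by
        simp [Matrix.mulVec, dotProduct, hu]
      have h2 : ∑ y, Γ x y = ((Finset.univ.filter fun y => adj f x y).card : ℝ) := by
        rw [← Finset.sum_boole]
        exact Finset.sum_congr rfl fun y _ => hΓent x y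
      have h4 : (((d-1)*d : ℕ) : ℝ) ≤ ((Finset.univ.filter fun y => adj f x y).card : ℝ) :=
        Nat.cast_le.mpr (deg_ge f hf x)
      have h5 : (((d-1)*d : ℕ) : ℝ) = ((d:ℝ)-1)*d := by
        push_cast [Nat.cast_sub (by omega : 1 ≤ d)]
        ring
      rw [h1, h2, ← h5]
      exact h4
    apply le_specNorm_of_apply Γ _ u
    · intro h
      have h2 : u x0 = (0 : EuclideanSpace ℝ (SV d)) x0 := by rw [h]
      rw [hu] at h2
      simpa using h2
    · rw [norm_image, EuclideanSpace.norm_eq]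
      have e1 : ∑ x : SV d, ‖u x‖^2 = (Fintype.card (SV d) : ℝ) := by
        simp [hu]
      have e2 : ∀ x, (((d:ℝ)-1)*d)^2 ≤ (Γ.mulVec u x)^2 := fun x =>
        pow_le_pow_left₀ hc (hvc x) 2
      calc ((d:ℝ)-1)*d * Real.sqrt (∑ x, ‖u x‖^2)
          = Real.sqrt ((((d:ℝ)-1)*d)^2 * ∑ x, ‖u x‖^2) := by
            rw [Real.sqrt_mul (sq_nonneg _), Real.sqrt_sq hc]
        _ = Real.sqrt (∑ _x : SV d, (((d:ℝ)-1)*d)^2) := by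
            rw [e1, Finset.sum_const, nsmul_eq_mul, Finset.card_univ, mul_comm]
        _ ≤ Real.sqrt (∑ x, (Γ.mulVec u x)^2) :=
            Real.sqrt_le_sqrt (Finset.sum_le_sum fun x _ => e2 x)
  have hmem : specNorm Γ / Dsup ∈ { r : ℝ | ∃ Γ' : Matrix (SV d) (SV d) ℝ, Γ' ≠ 0 ∧
      Γ'.IsSymm ∧ (∀ x y, 0 ≤ Γ' x y) ∧ (∀ x y, f x = f y → Γ' x y = 0) ∧
      r = specNorm Γ' / ⨆ i : Fin d × Fin d, specNorm (Γ' ⊙ diffMatrix inp i) } :=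
    ⟨Γ, hΓ0, hΓsymm, hΓnn, hΓf, by rw [hDsup]⟩
  have hbdd : BddAbove { r : ℝ | ∃ Γ' : Matrix (SV d) (SV d) ℝ, Γ' ≠ 0 ∧
      Γ'.IsSymm ∧ (∀ x y, 0 ≤ Γ' x y) ∧ (∀ x y, f x = f y → Γ' x y = 0) ∧
      r = specNorm Γ' / ⨆ i : Fin d × Fin d, specNorm (Γ' ⊙ diffMatrix inp i) } := by
    refine ⟨((d*d : ℕ) : ℝ), ?_⟩
    rintro r ⟨G, hG0, -, hGnn, hGf, rfl⟩
    set DG := ⨆ i : Fin d × Fin d, specNorm (G ⊙ diffMatrix inp i) with hDG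
    have hG1 : ∀ (x y : SV d) (i : Fin d × Fin d), (G ⊙ diffMatrix inp i) x y
        = G x y * (if x.1 i.1 i.2 ≠ y.1 i.1 i.2 then (1:ℝ) else 0) := fun x y i => rfl
    have hGex : ∃ x y, G x y ≠ 0 := by
      by_contra h
      push_neg at h
      exact hG0 (by ext x y; simpa using h x y)
    obtain ⟨a, b, hab⟩ := hGex
    have hfab : f a ≠ f b := fun h => hab (hGf a b h)
    obtain ⟨i1, hi1⟩ := exists_diff f hf a b hfab
    have hGD0 : (G ⊙ diffMatrix inp i1) ≠ 0 := by
      intro h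
      have h2 : (G ⊙ diffMatrix inp i1) a b = (0 : Matrix (SV d) (SV d) ℝ) a b := by rw [h]
      rw [hG1, if_pos hi1, mul_one] at h2
      exact hab (by simpa using h2)
    have hDGpos : 0 < DG := by
      rw [hDG]
      exact lt_of_lt_of_le (specNorm_pos _ hGD0) (le_ciSup (f := fun i : Fin d × Fin d => specNorm (G ⊙ diffMatrix inp i)) (Finite.bddAbove_range _) i1)
    have hmono : specNorm G ≤ ∑ i : Fin d × Fin d, specNorm (G ⊙ diffMatrix inp i) := by
      refine le_trans (specNorm_mono G (∑ i : Fin d × Fin d, G ⊙ diffMatrix inp i) ?_)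
        (specNorm_sum_le _)
      intro x y
      rw [abs_of_nonneg (hGnn x y)]
      have hsa : (∑ i : Fin d × Fin d, G ⊙ diffMatrix inp i) x y
          = ∑ i : Fin d × Fin d, (G ⊙ diffMatrix inp i) x y := by
        simp only [Matrix.sum_apply]
      rw [hsa]
      by_cases hxy : G x y = 0
      · rw [hxy]
        refine Finset.sum_nonneg fun i _ => ?_
        rw [hG1, hxy, zero_mul]
      · have hfxy : f x ≠ f y := fun h => hxy (hGf x y h)
        obtain ⟨i2, hi2⟩ := exists_diff f hf x y hfxy
        have he : G x y = (G ⊙ diffMatrix inp i2) x y := by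
          rw [hG1, if_pos hi2, mul_one]
        rw [he]
        refine Finset.single_le_sum
          (f := fun i : Fin d × Fin d => (G ⊙ diffMatrix inp i) x y)
          (fun i _ => ?_) (Finset.mem_univ i2)
        show 0 ≤ (G ⊙ diffMatrix inp i) x y
        rw [hG1]
        split_ifs with h
        · rw [mul_one]; exact hGnn x y
        · rw [mul_zero]
    have hsum_le : ∑ i : Fin d × Fin d, specNorm (G ⊙ diffMatrix inp i)
        ≤ ((d*d:ℕ):ℝ) * DG := by
      rw [hDG]
      calc ∑ i : Fin d × Fin d, specNorm (G ⊙ diffMatrix inp i)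
          ≤ ∑ _i : Fin d × Fin d, (⨆ j : Fin d × Fin d, specNorm (G ⊙ diffMatrix inp j)) :=
            Finset.sum_le_sum fun i _ => le_ciSup (f := fun j : Fin d × Fin d => specNorm (G ⊙ diffMatrix inp j)) (Finite.bddAbove_range _) i
        _ = ((d*d:ℕ):ℝ) * (⨆ j : Fin d × Fin d, specNorm (G ⊙ diffMatrix inp j)) := by
            rw [Finset.sum_const, nsmul_eq_mul, Finset.card_univ]
            simp
    exact (div_le_iff₀ hDGpos).mpr (hmono.trans hsum_le)
  unfold ADV
  refine le_trans ?_ (le_csSup hbdd hmem)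
  rw [le_div_iff₀ hDpos]
  have h1 : 0 ≤ (d:ℝ) - 1 := by linarith
  calc ((d:ℝ)-1) * Dsup ≤ ((d:ℝ)-1) * d := mul_le_mul_of_nonneg_left hDle h1
    _ ≤ specNorm Γ := hdN
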